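/- arXiv:2506.15288 — 5 statements merged into one kernel-verified Lean document; each statement's English description precedes it below -/
import Mathlib

section
/- Let H be a real Hilbert space, L : H →L[ℝ] H bounded self-adjoint with ⟪L x, x⟫ ≤ -γ‖x‖² for all x (γ > 0), and Q : H →L[ℝ] H a bounded operator. Then the operator-valued function t ↦ exp(t • L) ∘ Q ∘ exp(t • L) is Bochner integrable on [0, ∞) in the Banach space of bounded operators on H, and the norm of its integral P = ∫₀^∞ exp(t • L) ∘ Q ∘ exp(t • L) dt satisfies ‖P‖ ≤ ‖Q‖ / (2 * γ). -/
open scoped InnerProductSpace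
open MeasureTheory

lemma exp_smul_norm_bound
    {H : Type*} [NormedAddCommGroup H] [InnerProductSpace ℝ H] [CompleteSpace H]
    (L : H →L[ℝ] H) (γ : ℝ) (hγ : 0 < γ)
    (hdiss : ∀ x : H, ⟪L x, x⟫_ℝ ≤ -γ * ‖x‖ ^ 2)
    {t : ℝ} (ht : 0 ≤ t) : ‖NormedSpace.exp (t • L)‖ ≤ Real.exp (-γ * t) := by
  apply ContinuousLinearMap.opNorm_le_bound _ (Real.exp_nonneg _)
  intro x
  set u : ℝ → H := fun s => NormedSpace.exp (s • L) x with hu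
  have hud : ∀ s : ℝ, HasDerivAt u (L (u s)) s := by
    intro s
    have h1 := hasDerivAt_exp_smul_const' (𝕂 := ℝ) L s
    have h2 := h1.clm_apply (hasDerivAt_const s x)
    simpa [u, ContinuousLinearMap.mul_apply] using h2
  set g : ℝ → ℝ := fun s => Real.exp (2 * γ * s) * ⟪u s, u s⟫_ℝ with hg
  have hgd : ∀ s : ℝ, HasDerivAt g
      (2 * γ * Real.exp (2 * γ * s) * ⟪u s, u s⟫_ℝ +
        Real.exp (2 * γ * s) * (⟪u s, L (u s)⟫_ℝ + ⟪L (u s), u s⟫_ℝ)) s := by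
    intro s
    have he : HasDerivAt (fun y : ℝ => Real.exp (2 * γ * y)) (Real.exp (2 * γ * s) * (2 * γ * 1)) s :=
      ((hasDerivAt_id s).const_mul (2 * γ)).exp
    have hi : HasDerivAt (fun y => ⟪u y, u y⟫_ℝ) (⟪u s, L (u s)⟫_ℝ + ⟪L (u s), u s⟫_ℝ) s :=
      (hud s).inner ℝ (hud s)
    have : HasDerivAt (fun y => Real.exp (2 * γ * y) * ⟪u y, u y⟫_ℝ) _ s := he.mul hi
    convert this using 1
    ring
  have hg' : ∀ s : ℝ, deriv g s ≤ 0 := by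
    intro s
    rw [(hgd s).deriv]
    have h1 : ⟪u s, L (u s)⟫_ℝ = ⟪L (u s), u s⟫_ℝ := real_inner_comm _ _
    have h2 : ⟪L (u s), u s⟫_ℝ ≤ -γ * ‖u s‖ ^ 2 := hdiss _
    have h3 : ⟪u s, u s⟫_ℝ = ‖u s‖ ^ 2 := real_inner_self_eq_norm_sq _
    have hE : (0:ℝ) < Real.exp (2 * γ * s) := Real.exp_pos _
    rw [h1, h3]
    nlinarith [mul_le_mul_of_nonneg_left h2 hE.le]
  have hanti : Antitone g := antitone_of_deriv_nonpos (fun s => (hgd s).differentiableAt) hg'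
  have hle : g t ≤ g 0 := hanti ht
  have hg0 : g 0 = ‖x‖ ^ 2 := by
    simp [g, u, real_inner_self_eq_norm_sq]
  have key : Real.exp (2 * γ * t) * ‖u t‖ ^ 2 ≤ ‖x‖ ^ 2 := by
    rw [← hg0]
    simpa [g, real_inner_self_eq_norm_sq] using hle
  have h4 : ‖u t‖ ^ 2 ≤ (Real.exp (-γ * t) * ‖x‖) ^ 2 := by
    have h5 : Real.exp (-γ * t) * Real.exp (-γ * t) * Real.exp (2 * γ * t) = 1 := by
      rw [← Real.exp_add, ← Real.exp_add]
      norm_num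
      ring
    have h6 : (0:ℝ) ≤ Real.exp (-γ * t) * Real.exp (-γ * t) := by positivity
    nlinarith [mul_le_mul_of_nonneg_left key h6, h5]
  have := (pow_le_pow_iff_left₀ (norm_nonneg _)
      (mul_nonneg (Real.exp_nonneg _) (norm_nonneg _)) (two_ne_zero)).mp h4
  simpa [mul_comm] using this

theorem energy_covariance_bochner_integrable
    {H : Type*} [NormedAddCommGroup H] [InnerProductSpace ℝ H] [CompleteSpace H]
    (L : H →L[ℝ] H) (γ : ℝ) (hγ : 0 < γ)
    (hsa : ∀ x y : H, ⟪L x, y⟫_ℝ = ⟪x, L y⟫_ℝ)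
    (hdiss : ∀ x : H, ⟪L x, x⟫_ℝ ≤ -γ * ‖x‖ ^ 2)
    (Q : H →L[ℝ] H) :
    IntegrableOn
      (fun t : ℝ => NormedSpace.exp (t • L) ∘L Q ∘L NormedSpace.exp (t • L))
      (Set.Ioi 0) ∧
    ‖∫ t in Set.Ioi (0 : ℝ),
        NormedSpace.exp (t • L) ∘L Q ∘L NormedSpace.exp (t • L)‖
      ≤ ‖Q‖ / (2 * γ) := by
  set f : ℝ → (H →L[ℝ] H) :=
    fun t => NormedSpace.exp (t • L) ∘L Q ∘L NormedSpace.exp (t • L) with hf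
  have hcont : Continuous f := by
    letI : NormedAlgebra ℚ (H →L[ℝ] H) := NormedAlgebra.restrictScalars ℚ ℝ _
    have hce : Continuous fun t : ℝ => NormedSpace.exp (t • L) :=
      NormedSpace.exp_continuous.comp (continuous_id.smul continuous_const)
    exact (hce.clm_comp continuous_const).clm_comp hce
  have hbound : ∀ t ∈ Set.Ioi (0:ℝ), ‖f t‖ ≤ ‖Q‖ * Real.exp (-(2*γ) * t) := by
    intro t ht
    have ht' : (0:ℝ) ≤ t := le_of_lt ht
    have hE := exp_smul_norm_bound L γ hγ hdiss ht'
    calc ‖f t‖ ≤ ‖NormedSpace.exp (t • L)‖ * ‖Q ∘L NormedSpace.exp (t • L)‖ :=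
          ContinuousLinearMap.opNorm_comp_le _ _
      _ ≤ ‖NormedSpace.exp (t • L)‖ * (‖Q‖ * ‖NormedSpace.exp (t • L)‖) := by
          gcongr
          exact ContinuousLinearMap.opNorm_comp_le _ _
      _ ≤ Real.exp (-γ * t) * (‖Q‖ * Real.exp (-γ * t)) :=
          mul_le_mul hE (mul_le_mul_of_nonneg_left hE (norm_nonneg Q)) (by positivity)
            (Real.exp_nonneg _)
      _ = ‖Q‖ * Real.exp (-(2*γ) * t) := by
          rw [show Real.exp (-γ * t) * (‖Q‖ * Real.exp (-γ * t))
              = ‖Q‖ * (Real.exp (-γ * t) * Real.exp (-γ * t)) from by ring, ← Real.exp_add]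
          ring_nf
  have hgint : IntegrableOn (fun t : ℝ => ‖Q‖ * Real.exp (-(2*γ) * t)) (Set.Ioi 0) := by
    exact (exp_neg_integrableOn_Ioi 0 (by positivity)).const_mul _
  haveI : SecondCountableTopologyEither ℝ (H →L[ℝ] H) :=
    secondCountableTopologyEither_of_left _ _
  have hint : IntegrableOn f (Set.Ioi 0) := by
    apply Integrable.mono' hgint (hcont.aestronglyMeasurable.restrict)
    filter_upwards [ae_restrict_mem measurableSet_Ioi] with t ht
    exact hbound t ht
  refine ⟨hint, ?_⟩
  have h1 : ‖∫ t in Set.Ioi (0:ℝ), f t‖ ≤ ∫ t in Set.Ioi (0:ℝ), ‖Q‖ * Real.exp (-(2*γ) * t) := by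
    apply norm_integral_le_of_norm_le hgint
    filter_upwards [ae_restrict_mem measurableSet_Ioi] with t ht
    exact hbound t ht
  refine h1.trans ?_
  have h2 : ∫ t in Set.Ioi (0:ℝ), ‖Q‖ * Real.exp (-(2*γ) * t) = ‖Q‖ * (2*γ)⁻¹ := by
    rw [MeasureTheory.integral_const_mul]
    congr 1
    have h3 : ∫ t in Set.Ioi (0:ℝ), Real.exp (-(2*γ) * t)
        = ∫ t in Set.Ioi (0:ℝ), (fun x => Real.exp (-x)) ((2*γ) * t) := by
      congr 1; ext t; ring_nf
    rw [h3, integral_comp_mul_left_Ioi (fun x => Real.exp (-x)) 0 (by positivity)]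
    simp [integral_exp_neg_Ioi, integral_exp_Iic_zero]
  rw [h2, div_eq_mul_inv]
end

section
/- Let H be a real Hilbert space, L : H →L[ℝ] H bounded self-adjoint with ⟪L x, x⟫ ≤ -γ‖x‖² for all x (γ > 0), and Q : H →L[ℝ] H a bounded operator. Define P = ∫₀^∞ exp(t • L) ∘ Q ∘ exp(t • L) dt. Then P satisfies the operator Lyapunov (energy balance) equation L ∘ P + P ∘ L = -Q. -/
open scoped InnerProductSpace
open MeasureTheory

set_option maxHeartbeats 1000000
set_option synthInstance.maxHeartbeats 400000

theorem energy_covariance_lyapunov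
    {H : Type*} [NormedAddCommGroup H] [InnerProductSpace ℝ H] [CompleteSpace H]
    (L : H →L[ℝ] H) (γ : ℝ) (hγ : 0 < γ)
    (hsa : ∀ x y : H, ⟪L x, y⟫_ℝ = ⟪x, L y⟫_ℝ)
    (hdiss : ∀ x : H, ⟪L x, x⟫_ℝ ≤ -γ * ‖x‖ ^ 2)
    (Q : H →L[ℝ] H)
    (P : H →L[ℝ] H)
    (hP : P = ∫ t in Set.Ioi (0 : ℝ),
        NormedSpace.exp (t • L) ∘L Q ∘L NormedSpace.exp (t • L)) :
    L ∘L P + P ∘L L = -Q := by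
  classical
  set A : ℝ → (H →L[ℝ] H) := fun t => NormedSpace.exp (t • L) with hAdef
  -- pointwise exponential decay bound
  have hbound : ∀ t : ℝ, 0 ≤ t → ∀ x : H, ‖A t x‖ ≤ Real.exp (-γ * t) * ‖x‖ := by
    intro t ht x
    set u : ℝ → H := fun s => A s x with hudef
    have hu : ∀ s : ℝ, HasDerivAt u (L (u s)) s := by
      intro s
      have h1 : HasDerivAt A (L * A s) s := hasDerivAt_exp_smul_const' (𝕂 := ℝ) L s
      have h2 := h1.clm_apply (hasDerivAt_const s x)
      simpa using h2
    have hg : ∀ s : ℝ, HasDerivAt (fun s => ⟪u s, u s⟫_ℝ)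
        (2 * ⟪L (u s), u s⟫_ℝ) s := by
      intro s
      have := (hu s).inner ℝ (hu s)
      have hsymm : ⟪u s, L (u s)⟫_ℝ = ⟪L (u s), u s⟫_ℝ := (hsa (u s) (u s)).symm
      simpa [hsymm, two_mul] using this
    have he : ∀ s : ℝ, HasDerivAt (fun s => Real.exp (2 * γ * s))
        (Real.exp (2 * γ * s) * (2 * γ)) s := by
      intro s
      have h0 : HasDerivAt (fun s : ℝ => 2 * γ * s) (2 * γ) s := by
        simpa using (hasDerivAt_id s).const_mul (2 * γ)
      exact h0.exp
    set φ : ℝ → ℝ := fun s => Real.exp (2 * γ * s) * ⟪u s, u s⟫_ℝ with hφdef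
    have hφ : ∀ s : ℝ, HasDerivAt φ
        (Real.exp (2 * γ * s) * (2 * γ) * ⟪u s, u s⟫_ℝ
          + Real.exp (2 * γ * s) * (2 * ⟪L (u s), u s⟫_ℝ)) s := fun s =>
      (he s).mul (hg s)
    have hanti : Antitone φ := by
      apply antitone_of_deriv_nonpos
      · intro s; exact (hφ s).differentiableAt
      · intro s
        rw [(hφ s).deriv]
        have h1 : ⟪L (u s), u s⟫_ℝ ≤ -γ * ‖u s‖ ^ 2 := hdiss (u s)
        have h2 : ⟪u s, u s⟫_ℝ = ‖u s‖ ^ 2 := real_inner_self_eq_norm_sq (u s)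
        have h3 : (0:ℝ) < Real.exp (2 * γ * s) := Real.exp_pos _
        rw [h2]
        nlinarith [sq_nonneg ‖u s‖]
    have h0 : φ t ≤ φ 0 := hanti ht
    have hu0 : u 0 = x := by simp [hudef, hAdef, NormedSpace.exp_zero]
    have hφ0 : φ 0 = ‖x‖ ^ 2 := by
      simp [hφdef, hu0, real_inner_self_eq_norm_sq]
    have hφt : φ t = Real.exp (2 * γ * t) * ‖u t‖ ^ 2 := by
      simp [hφdef, real_inner_self_eq_norm_sq]
    have hkey : ‖u t‖ ^ 2 ≤ (Real.exp (-γ * t) * ‖x‖) ^ 2 := by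
      have h3 : (0:ℝ) < Real.exp (2 * γ * t) := Real.exp_pos _
      have h4 : Real.exp (2 * γ * t) * ‖u t‖ ^ 2 ≤ ‖x‖ ^ 2 := by
        rw [← hφt, ← hφ0]; exact h0
      have h5 : (Real.exp (-γ * t)) ^ 2 = (Real.exp (2 * γ * t))⁻¹ := by
        rw [← Real.exp_nat_mul, ← Real.exp_neg]; ring_nf
      rw [mul_pow, h5, inv_mul_eq_div, le_div_iff₀ h3]
      nlinarith [h4]
    have h6 : (0:ℝ) ≤ Real.exp (-γ * t) * ‖x‖ := by positivity
    nlinarith [norm_nonneg (u t), hkey]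
  have hAnorm : ∀ t : ℝ, 0 ≤ t → ‖A t‖ ≤ Real.exp (-γ * t) := by
    intro t ht
    exact ContinuousLinearMap.opNorm_le_bound _ (Real.exp_pos _).le (hbound t ht)
  set F : ℝ → (H →L[ℝ] H) := fun t => A t * Q * A t with hFdef
  -- continuity
  have hAc : Continuous A := by
    exact continuous_iff_continuousAt.2 fun t => (hasDerivAt_exp_smul_const' (𝕂 := ℝ) L t).continuousAt
  have hFc : Continuous F := (hAc.mul continuous_const).mul hAc
  -- derivative
  have hF' : ∀ t : ℝ, HasDerivAt F (L * F t + F t * L) t := by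
    intro t
    have h1 : HasDerivAt A (L * A t) t := hasDerivAt_exp_smul_const' (𝕂 := ℝ) L t
    have h2 : HasDerivAt A (A t * L) t := hasDerivAt_exp_smul_const (𝕂 := ℝ) L t
    have h3 : HasDerivAt (fun s => A s * Q) (L * A t * Q) t := h1.mul_const Q
    have h4 := h3.mul h2
    have h5 : HasDerivAt F (L * A t * Q * A t + A t * Q * (A t * L)) t := h4
    convert h5 using 1
    simp [hFdef, mul_assoc]
  -- norm bound on F
  have hFnorm : ∀ t ∈ Set.Ioi (0:ℝ), ‖F t‖ ≤ ‖Q‖ * Real.exp (-(2*γ) * t) := by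
    intro t ht
    have ht' : (0:ℝ) ≤ t := le_of_lt ht
    have h1 : ‖F t‖ ≤ ‖A t‖ * ‖Q‖ * ‖A t‖ :=
      le_trans (norm_mul_le _ _) (by gcongr; exact norm_mul_le _ _)
    have h2 : ‖A t‖ ≤ Real.exp (-γ * t) := hAnorm t ht'
    have h3 : Real.exp (-γ * t) * ‖Q‖ * Real.exp (-γ * t)
        = ‖Q‖ * Real.exp (-(2*γ) * t) := by
      rw [mul_comm (Real.exp (-γ * t)) ‖Q‖, mul_assoc, ← Real.exp_add]
      ring_nf
    calc ‖F t‖ ≤ ‖A t‖ * ‖Q‖ * ‖A t‖ := h1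
      _ ≤ Real.exp (-γ * t) * ‖Q‖ * Real.exp (-γ * t) :=
          mul_le_mul (mul_le_mul h2 le_rfl (norm_nonneg Q) (Real.exp_pos _).le) h2
            (norm_nonneg _) (by positivity)
      _ = ‖Q‖ * Real.exp (-(2*γ) * t) := h3
  -- integrability
  have hmaj : IntegrableOn (fun t => ‖Q‖ * Real.exp (-(2*γ) * t)) (Set.Ioi (0:ℝ)) :=
    (exp_neg_integrableOn_Ioi 0 (by positivity)).const_mul ‖Q‖
  have hFint : IntegrableOn F (Set.Ioi (0:ℝ)) := by
    refine Integrable.mono hmaj hFc.aestronglyMeasurable.restrict ?_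
    filter_upwards [ae_restrict_mem measurableSet_Ioi] with t ht
    have := hFnorm t ht
    have h0 : (0:ℝ) ≤ ‖Q‖ * Real.exp (-(2*γ) * t) := by positivity
    rwa [Real.norm_eq_abs, abs_of_nonneg h0]
  have hLFint : IntegrableOn (fun t => L * F t) (Set.Ioi (0:ℝ)) :=
    (ContinuousLinearMap.mul ℝ (H →L[ℝ] H) L).integrable_comp hFint
  have hFLint : IntegrableOn (fun t => F t * L) (Set.Ioi (0:ℝ)) :=
    ((ContinuousLinearMap.mul ℝ (H →L[ℝ] H)).flip L).integrable_comp hFint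
  -- F tends to 0 at infinity
  have htend : Filter.Tendsto F Filter.atTop (nhds 0) := by
    have hev : ∀ᶠ t in Filter.atTop, ‖F t‖ ≤ ‖Q‖ * Real.exp (-(2*γ) * t) := by
      filter_upwards [Filter.eventually_gt_atTop 0] with t ht
      exact hFnorm t ht
    have h1 : Filter.Tendsto (fun t : ℝ => Real.exp (-(2*γ) * t))
        Filter.atTop (nhds 0) := by
      have h2 : Filter.Tendsto (fun t : ℝ => (2*γ) * t) Filter.atTop Filter.atTop :=
        Filter.Tendsto.const_mul_atTop (by positivity) Filter.tendsto_id
      have h3 := Real.tendsto_exp_neg_atTop_nhds_zero.comp h2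
      simpa [Function.comp_def, neg_mul] using h3
    have hg0 : Filter.Tendsto (fun t : ℝ => ‖Q‖ * Real.exp (-(2*γ) * t))
        Filter.atTop (nhds 0) := by simpa using h1.const_mul ‖Q‖
    exact squeeze_zero_norm' hev hg0
  -- FTC on [0, ∞)
  have hF0 : F 0 = Q := by
    simp [hFdef, hAdef, NormedSpace.exp_zero]
  have key : (∫ t in Set.Ioi (0:ℝ), (L * F t + F t * L)) = 0 - F 0 :=
    integral_Ioi_of_hasDerivAt_of_tendsto hFc.continuousWithinAt
      (fun t _ => hF' t) (hLFint.add hFLint) htend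
  -- rewrite P as integral of F
  have hP' : P = ∫ t in Set.Ioi (0:ℝ), F t := by
    rw [hP]; rfl
  have hLP : L ∘L P = ∫ t in Set.Ioi (0:ℝ), L * F t := by
    have h := (ContinuousLinearMap.mul ℝ (H →L[ℝ] H) L).integral_comp_comm hFint
    rw [hP']
    exact h.symm
  have hPL : P ∘L L = ∫ t in Set.Ioi (0:ℝ), F t * L := by
    have h := ((ContinuousLinearMap.mul ℝ (H →L[ℝ] H)).flip L).integral_comp_comm hFint
    rw [hP']
    exact h.symm
  rw [hLP, hPL, ← integral_add hLFint hFLint, key, hF0, zero_sub]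
end

section
/- Let H be a real Hilbert space, L : H →L[ℝ] H bounded self-adjoint with ⟪L x, x⟫ ≤ -γ‖x‖² for all x (γ > 0), and Q : H →L[ℝ] H a bounded operator. Suppose φ_j and φ_m are eigenvectors of L with L φ_j = λ_j • φ_j and L φ_m = λ_m • φ_m, where λ_j, λ_m < 0. Then the energy covariance operator P = ∫₀^∞ exp(t • L) ∘ Q ∘ exp(t • L) dt satisfies ⟪φ_j, P φ_m⟫ = ⟪φ_j, Q φ_m⟫ / (-(λ_j + λ_m)). -/
set_option maxHeartbeats 1000000
set_option synthInstance.maxHeartbeats 1000000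

open scoped InnerProductSpace
open MeasureTheory

section Aux

open Set

lemma exp_apply_eig' {H : Type*} [NormedAddCommGroup H] [NormedSpace ℝ H]
    [CompleteSpace H] (A : H →L[ℝ] H) (φ : H) (lam : ℝ) (h : A φ = lam • φ) :
    NormedSpace.exp A φ = Real.exp lam • φ := by
  have hpow : ∀ n : ℕ, (A ^ n) φ = lam ^ n • φ := by
    intro n; induction n with
    | zero => simp
    | succ n ih =>
      rw [pow_succ, ContinuousLinearMap.mul_apply, h, _root_.map_smul, ih, smul_smul, pow_succ,
        mul_comm]
  have hsum := NormedSpace.expSeries_summable' (𝕂 := ℝ) A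
  have := (ContinuousLinearMap.apply ℝ H φ).map_tsum hsum
  rw [NormedSpace.exp_eq_tsum ℝ]
  simp only [ContinuousLinearMap.apply_apply] at this
  rw [this]
  simp only [ContinuousLinearMap.smul_apply, hpow, smul_smul]
  rw [Summable.tsum_smul_const]
  · congr 1
    rw [Real.exp_eq_exp_ℝ, NormedSpace.exp_eq_tsum ℝ]
    simp [smul_eq_mul]
  · simpa [smul_eq_mul] using NormedSpace.expSeries_summable' (𝕂 := ℝ) lam

lemma exp_symm' {H : Type*} [NormedAddCommGroup H] [InnerProductSpace ℝ H]
    [CompleteSpace H] (L : H →L[ℝ] H)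
    (hsa : ∀ x y : H, ⟪L x, y⟫_ℝ = ⟪x, L y⟫_ℝ) (t : ℝ) (x y : H) :
    ⟪NormedSpace.exp (t • L) x, y⟫_ℝ = ⟪x, NormedSpace.exp (t • L) y⟫_ℝ := by
  have htL : IsSelfAdjoint (t • L) := LinearMap.IsSymmetric.isSelfAdjoint (fun a b => by
    simp only [ContinuousLinearMap.coe_coe, ContinuousLinearMap.smul_apply,
      real_inner_smul_left, real_inner_smul_right, hsa])
  have hexp : IsSelfAdjoint (NormedSpace.exp (t • L)) := by
    rw [IsSelfAdjoint, NormedSpace.star_exp, htL.star_eq]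
  exact (ContinuousLinearMap.isSelfAdjoint_iff_isSymmetric.mp hexp) x y

lemma exp_decay' {H : Type*} [NormedAddCommGroup H] [InnerProductSpace ℝ H]
    [CompleteSpace H] (L : H →L[ℝ] H) (γ : ℝ)
    (hdiss : ∀ x : H, ⟪L x, x⟫_ℝ ≤ -γ * ‖x‖ ^ 2)
    {t : ℝ} (ht : 0 ≤ t) (x : H) :
    ‖NormedSpace.exp (t • L) x‖ ≤ Real.exp (-γ * t) * ‖x‖ := by
  set u : ℝ → H := fun s => NormedSpace.exp (s • L) x with hu_def
  have hu : ∀ s : ℝ, HasDerivAt u (L (u s)) s := by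
    intro s
    have h1 := _root_.hasDerivAt_exp_smul_const' (𝕂 := ℝ) L s
    have h2 := h1.clm_apply (hasDerivAt_const s x)
    simpa [ContinuousLinearMap.mul_apply] using h2
  set g : ℝ → ℝ := fun s => Real.exp (2 * γ * s) * ⟪u s, u s⟫_ℝ with hg_def
  have hg : ∀ s : ℝ, HasDerivAt g
      (Real.exp (2 * γ * s) * (2 * γ) * ⟪u s, u s⟫_ℝ +
        Real.exp (2 * γ * s) * (⟪u s, L (u s)⟫_ℝ + ⟪L (u s), u s⟫_ℝ)) s := by
    intro s
    have he : HasDerivAt (fun s : ℝ => Real.exp (2 * γ * s))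
        (Real.exp (2 * γ * s) * (2 * γ)) s := by
      simpa using ((hasDerivAt_id s).const_mul (2 * γ)).exp
    have hi : HasDerivAt (fun s => ⟪u s, u s⟫_ℝ) (⟪u s, L (u s)⟫_ℝ + ⟪L (u s), u s⟫_ℝ) s :=
      (hu s).inner ℝ (hu s)
    exact he.mul hi
  have hderiv_nonpos : ∀ s : ℝ, deriv g s ≤ 0 := by
    intro s
    rw [(hg s).deriv]
    have h1 : ⟪u s, u s⟫_ℝ = ‖u s‖ ^ 2 := real_inner_self_eq_norm_sq (u s)
    have h2 : ⟪u s, L (u s)⟫_ℝ = ⟪L (u s), u s⟫_ℝ := real_inner_comm _ _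
    have h3 := hdiss (u s)
    rw [h1, h2]
    nlinarith [Real.exp_pos (2 * γ * s)]
  have hanti : Antitone g :=
    antitone_of_deriv_nonpos (fun s => (hg s).differentiableAt) hderiv_nonpos
  have hkey : g t ≤ g 0 := hanti ht
  have hu0 : u 0 = x := by simp [hu_def]
  have hg0 : g 0 = ‖x‖ ^ 2 := by simp [hg_def, hu0, real_inner_self_eq_norm_sq]
  have hgt : g t = Real.exp (2 * γ * t) * ‖u t‖ ^ 2 := by
    simp [hg_def, real_inner_self_eq_norm_sq]
  have hsq : ‖u t‖ ^ 2 ≤ (Real.exp (-γ * t) * ‖x‖) ^ 2 := by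
    rw [hgt, hg0] at hkey
    have he : Real.exp (-γ * t) ^ 2 = (Real.exp (2 * γ * t))⁻¹ := by
      rw [← Real.exp_nat_mul, ← Real.exp_neg]; ring_nf
    rw [mul_pow, he]
    have h4 : (0:ℝ) < Real.exp (2 * γ * t) := Real.exp_pos _
    have h5 : ‖u t‖ ^ 2 = (Real.exp (2 * γ * t))⁻¹ * (Real.exp (2 * γ * t) * ‖u t‖ ^ 2) := by
      field_simp
    rw [h5]
    exact mul_le_mul_of_nonneg_left hkey (inv_nonneg.2 h4.le)
  calc ‖u t‖ = Real.sqrt (‖u t‖ ^ 2) := (Real.sqrt_sq (norm_nonneg _)).symm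
    _ ≤ Real.sqrt ((Real.exp (-γ * t) * ‖x‖) ^ 2) := Real.sqrt_le_sqrt hsq
    _ = Real.exp (-γ * t) * ‖x‖ := Real.sqrt_sq (by positivity)

lemma exp_integrableOn' {H : Type*} [NormedAddCommGroup H] [InnerProductSpace ℝ H]
    [CompleteSpace H] (L Q : H →L[ℝ] H) (γ : ℝ) (hγ : 0 < γ)
    (hdiss : ∀ x : H, ⟪L x, x⟫_ℝ ≤ -γ * ‖x‖ ^ 2) :
    IntegrableOn (fun t : ℝ => NormedSpace.exp (t • L) ∘L Q ∘L NormedSpace.exp (t • L))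
      (Ioi 0) volume := by
  have hEnorm : ∀ {t : ℝ}, 0 ≤ t → ‖NormedSpace.exp (t • L)‖ ≤ Real.exp (-γ * t) := by
    intro t ht
    exact ContinuousLinearMap.opNorm_le_bound _ (Real.exp_nonneg _) (exp_decay' L γ hdiss ht)
  have hcontE : Continuous fun t : ℝ => NormedSpace.exp (t • L) :=
    (continuous_iff_continuousAt.2 fun y => (NormedSpace.exp_analytic (𝕂 := ℝ) y).continuousAt).comp (continuous_id.smul continuous_const)
  have hcont : Continuous fun t : ℝ =>
      NormedSpace.exp (t • L) ∘L Q ∘L NormedSpace.exp (t • L) :=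
    (hcontE.mul continuous_const).mul hcontE
  have hgint : IntegrableOn (fun t : ℝ => ‖Q‖ * Real.exp (-(2 * γ) * t)) (Ioi 0) volume :=
    (exp_neg_integrableOn_Ioi 0 (by positivity)).const_mul ‖Q‖
  refine Integrable.mono' hgint hcont.aestronglyMeasurable.restrict ?_
  rw [ae_restrict_iff' measurableSet_Ioi]
  filter_upwards with t ht
  have ht' : (0:ℝ) ≤ t := le_of_lt ht
  have h1 : ‖NormedSpace.exp (t • L) ∘L Q ∘L NormedSpace.exp (t • L)‖ ≤
      ‖NormedSpace.exp (t • L)‖ * ‖Q‖ * ‖NormedSpace.exp (t • L)‖ := by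
    calc ‖NormedSpace.exp (t • L) ∘L Q ∘L NormedSpace.exp (t • L)‖
        ≤ ‖NormedSpace.exp (t • L)‖ * ‖Q ∘L NormedSpace.exp (t • L)‖ :=
          ContinuousLinearMap.opNorm_comp_le _ _
      _ ≤ ‖NormedSpace.exp (t • L)‖ * (‖Q‖ * ‖NormedSpace.exp (t • L)‖) := by
          gcongr
          exact ContinuousLinearMap.opNorm_comp_le _ _
      _ = ‖NormedSpace.exp (t • L)‖ * ‖Q‖ * ‖NormedSpace.exp (t • L)‖ := by ring
  refine h1.trans ?_
  have h2 := hEnorm ht'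
  have h3 : Real.exp (-γ * t) * Real.exp (-γ * t) = Real.exp (-(2 * γ) * t) := by
    rw [← Real.exp_add]; ring_nf
  calc ‖NormedSpace.exp (t • L)‖ * ‖Q‖ * ‖NormedSpace.exp (t • L)‖
      ≤ Real.exp (-γ * t) * ‖Q‖ * Real.exp (-γ * t) := by
        gcongr <;> positivity
    _ = ‖Q‖ * Real.exp (-(2 * γ) * t) := by rw [← h3]; ring

lemma exp_b_integral' {b : ℝ} (hb : b < 0) :
    ∫ t in Ioi (0:ℝ), Real.exp (b * t) = 1 / (-b) := by
  have hb' : b ≠ 0 := hb.ne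
  have hderiv : ∀ s ∈ Ioi (0:ℝ), HasDerivAt (fun r => Real.exp (b * r) / b)
      (Real.exp (b * s)) s := by
    intro s _
    have h1 : HasDerivAt (fun r : ℝ => Real.exp (b * r)) (Real.exp (b * s) * b) s := by
      simpa using ((hasDerivAt_id s).const_mul b).exp
    simpa [mul_div_cancel_right₀ _ hb'] using h1.div_const b
  have hint : IntegrableOn (fun s : ℝ => Real.exp (b * s)) (Ioi 0) := by
    have := exp_neg_integrableOn_Ioi 0 (neg_pos.mpr hb)
    simpa [neg_mul, neg_neg] using this
  have htend : Filter.Tendsto (fun r => Real.exp (b * r) / b) Filter.atTop (nhds 0) := by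
    have h1 : Filter.Tendsto (fun r : ℝ => b * r) Filter.atTop Filter.atBot :=
      Filter.Tendsto.const_mul_atTop_of_neg hb Filter.tendsto_id
    have h2 := (Real.tendsto_exp_atBot.comp h1).div_const b
    simpa using h2
  have hcont : ContinuousWithinAt (fun r => Real.exp (b * r) / b) (Ici (0:ℝ)) 0 :=
    (Continuous.continuousWithinAt (by continuity))
  have := integral_Ioi_of_hasDerivAt_of_tendsto hcont hderiv hint htend
  rw [this]
  simp [div_eq_iff hb']

end Aux

theorem energy_covariance_eigenvector_entries
    {H : Type*} [NormedAddCommGroup H] [InnerProductSpace ℝ H] [CompleteSpace H]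
    (L : H →L[ℝ] H) (γ : ℝ) (hγ : 0 < γ)
    (hsa : ∀ x y : H, ⟪L x, y⟫_ℝ = ⟪x, L y⟫_ℝ)
    (hdiss : ∀ x : H, ⟪L x, x⟫_ℝ ≤ -γ * ‖x‖ ^ 2)
    (Q : H →L[ℝ] H)
    (φj φm : H) (lamj lamm : ℝ)
    (hj : L φj = lamj • φj) (hm : L φm = lamm • φm)
    (hjneg : lamj < 0) (hmneg : lamm < 0)
    (P : H →L[ℝ] H)
    (hP : P = ∫ t in Set.Ioi (0 : ℝ),
        NormedSpace.exp (t • L) ∘L Q ∘L NormedSpace.exp (t • L)) :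
    ⟪φj, P φm⟫_ℝ = ⟪φj, Q φm⟫_ℝ / (-(lamj + lamm)) := by
  have hInt := exp_integrableOn' L Q γ hγ hdiss
  set F : (H →L[ℝ] H) →L[ℝ] ℝ :=
    (innerSL ℝ φj).comp (ContinuousLinearMap.apply ℝ H φm) with hF_def
  have hFP : ⟪φj, P φm⟫_ℝ = F P := by simp [hF_def]
  have hcomm := ContinuousLinearMap.integral_comp_comm F hInt
  have hpt : ∀ t : ℝ,
      F (NormedSpace.exp (t • L) ∘L Q ∘L NormedSpace.exp (t • L)) =
        Real.exp ((lamj + lamm) * t) * ⟪φj, Q φm⟫_ℝ := by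
    intro t
    have hEm : NormedSpace.exp (t • L) φm = Real.exp (t * lamm) • φm := by
      refine exp_apply_eig' _ _ _ ?_
      rw [ContinuousLinearMap.smul_apply, hm, smul_smul]
    have hEj : NormedSpace.exp (t • L) φj = Real.exp (t * lamj) • φj := by
      refine exp_apply_eig' _ _ _ ?_
      rw [ContinuousLinearMap.smul_apply, hj, smul_smul]
    have h1 : F (NormedSpace.exp (t • L) ∘L Q ∘L NormedSpace.exp (t • L)) =
        ⟪φj, NormedSpace.exp (t • L) (Q (NormedSpace.exp (t • L) φm))⟫_ℝ := by
      simp [hF_def]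
    rw [h1, ← exp_symm' L hsa t, hEj, hEm, _root_.map_smul, real_inner_smul_left,
      real_inner_smul_right, ← mul_assoc, ← Real.exp_add]
    ring_nf
  rw [hFP, hP, ← hcomm]
  calc (∫ t in Set.Ioi (0:ℝ),
        F (NormedSpace.exp (t • L) ∘L Q ∘L NormedSpace.exp (t • L)))
      = ∫ t in Set.Ioi (0:ℝ), Real.exp ((lamj + lamm) * t) * ⟪φj, Q φm⟫_ℝ := by
        exact integral_congr_ae (Filter.Eventually.of_forall fun t => hpt t)
    _ = (∫ t in Set.Ioi (0:ℝ), Real.exp ((lamj + lamm) * t)) * ⟪φj, Q φm⟫_ℝ :=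
        integral_mul_const _ _
    _ = (1 / (-(lamj + lamm))) * ⟪φj, Q φm⟫_ℝ := by
        rw [exp_b_integral' (by linarith)]
    _ = ⟪φj, Q φm⟫_ℝ / (-(lamj + lamm)) := by ring
end

section
/- Let N be a positive natural number, λ : Fin N → ℝ with λ k < 0 for all k, let Λ = Matrix.diagonal λ, and let Q be a real N × N matrix. Then the entrywise integral of the matrix-valued function t ↦ exp(t • Λ) * Q * exp(t • Λ) over [0, ∞) exists, and its (j, k) entry equals Q j k / (-(λ j + λ k)). -/
open MeasureTheory

lemma integral_exp_mul_Ioi_zero {c : ℝ} (hc : c < 0) :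
    ∫ t in Set.Ioi (0 : ℝ), Real.exp (c * t) = -1 / c := by
  have key := integral_Ioi_of_hasDerivAt_of_tendsto
    (f := fun t => Real.exp (c * t) / c) (f' := fun t => Real.exp (c * t)) (a := 0) (m := 0)
    (Continuous.continuousWithinAt (by continuity)) ?_ ?_ ?_
  · rw [key]; simp [Real.exp_zero, neg_div]
  · intro x hx
    simpa [hc.ne] using ((hasDerivAt_id x).const_mul c).exp.div_const c
  · have : -c > 0 := by linarith
    have := exp_neg_integrableOn_Ioi 0 this
    simpa [neg_neg] using this
  · have : Filter.Tendsto (fun t : ℝ => Real.exp (c * t)) Filter.atTop (nhds 0) :=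
      Real.tendsto_exp_atBot.comp (Filter.tendsto_id.const_mul_atTop_of_neg hc)
    simpa using this.div_const c

theorem diagonal_lyapunov_integral_entries
    (N : ℕ) (hN : 0 < N) (lam : Fin N → ℝ) (hlam : ∀ k, lam k < 0)
    (Q : Matrix (Fin N) (Fin N) ℝ) :
    ∀ j k : Fin N,
      IntegrableOn
        (fun t : ℝ =>
          (NormedSpace.exp (t • Matrix.diagonal lam) * Q *
            NormedSpace.exp (t • Matrix.diagonal lam)) j k)
        (Set.Ioi 0) ∧
      (∫ t in Set.Ioi (0 : ℝ),
          (NormedSpace.exp (t • Matrix.diagonal lam) * Q *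
            NormedSpace.exp (t • Matrix.diagonal lam)) j k)
        = Q j k / (-(lam j + lam k)) := by
  intro j k
  have hentry : ∀ t : ℝ,
      (NormedSpace.exp (t • Matrix.diagonal lam) * Q *
        NormedSpace.exp (t • Matrix.diagonal lam)) j k
      = Q j k * Real.exp ((lam j + lam k) * t) := by
    intro t
    have hdiag : t • Matrix.diagonal lam = Matrix.diagonal (fun i => t * lam i) := by
      ext a b; by_cases h : a = b <;> simp [Matrix.diagonal, h, Matrix.smul_apply]
    rw [hdiag, Matrix.exp_diagonal, Matrix.mul_diagonal, Matrix.diagonal_mul]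
    rw [Pi.coe_exp, Pi.coe_exp, ← Real.exp_eq_exp_ℝ]
    rw [mul_comm (Real.exp (t * lam j)) (Q j k), mul_assoc, ← Real.exp_add]
    ring_nf
  have hc : lam j + lam k < 0 := by have := hlam j; have := hlam k; linarith
  constructor
  · refine (integrableOn_congr_fun (fun t _ => (hentry t).symm) measurableSet_Ioi).mp ?_
    have : -(lam j + lam k) > 0 := by linarith
    have h1 := exp_neg_integrableOn_Ioi 0 this
    have h2 : IntegrableOn (fun t : ℝ => Real.exp ((lam j + lam k) * t)) (Set.Ioi 0) := by
      simpa [neg_neg] using h1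
    exact h2.const_mul (Q j k)
  · rw [setIntegral_congr_fun measurableSet_Ioi (fun t _ => hentry t)]
    rw [integral_const_mul, integral_exp_mul_Ioi_zero hc]
    rw [div_neg, ← mul_div_assoc, mul_neg_one, neg_div]
end

section
/- Let N be a positive natural number, λ : Fin N → ℝ with λ k < 0 for all k, and let Q be a real symmetric positive semidefinite N × N matrix. Then the matrix P with entries P j k = Q j k / (-(λ j + λ k)) is symmetric positive semidefinite. -/
open MeasureTheory Real Set

lemma exp_integral_aux {c : ℝ} (hc : 0 < c) :
    ∫ t in Ioi (0:ℝ), Real.exp (-(c * t)) = c⁻¹ := by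
  have := integral_comp_mul_left_Ioi (fun x => Real.exp (-x)) 0 hc
  simp only [mul_zero] at this
  rw [show (fun t => Real.exp (-(c * t))) = (fun t => (fun x => Real.exp (-x)) (c * t)) from rfl,
    this, integral_exp_neg_Ioi_zero, smul_eq_mul, mul_one]

theorem lyapunov_solution_posSemidef
    (N : ℕ) (hN : 0 < N) (lam : Fin N → ℝ) (hlam : ∀ k, lam k < 0)
    (Q : Matrix (Fin N) (Fin N) ℝ) (hQ : Q.PosSemidef)
    (P : Matrix (Fin N) (Fin N) ℝ)
    (hP : ∀ j k : Fin N, P j k = Q j k / (-(lam j + lam k))) :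
    P.PosSemidef := by
  have hb : ∀ j k : Fin N, 0 < -(lam j + lam k) := fun j k => by
    have := hlam j; have := hlam k; linarith
  rw [Matrix.posSemidef_iff_dotProduct_mulVec]
  constructor
  · ext j k
    simp only [Matrix.conjTranspose_apply, hP, star_trivial]
    rw [← hQ.1.apply j k]
    simp only [Matrix.conjTranspose_apply, star_trivial]
    rw [add_comm]
  · intro x
    -- the integrand
    set y : ℝ → Fin N → ℝ := fun t j => x j * Real.exp (lam j * t) with hy
    have hterm_int : ∀ (j k : Fin N), IntegrableOn
        (fun t => y t j * (Q j k * y t k)) (Ioi (0:ℝ)) := by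
      intro j k
      have : (fun t => y t j * (Q j k * y t k)) =
          fun t => (x j * Q j k * x k) * Real.exp (-(-(lam j + lam k)) * t) := by
        funext t
        simp only [hy]
        rw [show (-(-(lam j + lam k)) * t) = lam j * t + lam k * t by ring, Real.exp_add]
        ring
      rw [this]
      exact ((exp_neg_integrableOn_Ioi 0 (hb j k)).const_mul _)
    have key : ∀ j k : Fin N,
        ∫ t in Ioi (0:ℝ), y t j * (Q j k * y t k) = star (x j) * (P j k * x k) := by
      intro j k
      have heq : (fun t => y t j * (Q j k * y t k)) =
          fun t => (x j * Q j k * x k) * Real.exp (-(-(lam j + lam k) * t)) := by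
        funext t
        simp only [hy]
        rw [show (-(-(lam j + lam k) * t)) = lam j * t + lam k * t by ring, Real.exp_add]
        ring
      rw [heq, integral_const_mul, exp_integral_aux (hb j k), hP j k, star_trivial]
      field_simp
    have hsum : dotProduct (star x) (P.mulVec x) =
        ∫ t in Ioi (0:ℝ), dotProduct (y t) (Q.mulVec (y t)) := by
      simp only [dotProduct, Matrix.mulVec, Finset.mul_sum]
      rw [integral_finset_sum _ (fun j _ =>
        integrable_finset_sum _ (fun k _ => hterm_int j k))]
      refine Finset.sum_congr rfl fun j _ => ?_
      rw [integral_finset_sum _ (fun k _ => hterm_int j k)]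
      exact Finset.sum_congr rfl fun k _ => (key j k).symm
    rw [hsum]
    refine setIntegral_nonneg measurableSet_Ioi fun t _ => ?_
    have := hQ.dotProduct_mulVec_nonneg (y t)
    simpa using this
end
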